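/- For every natural number l, the set N = {r ∈ [r_m, r_M) : K_l(r,r) = 0} of zeros of the kernel on the diagonal is finite, and every r₀ ∈ N is a simple zero of the diagonal map, i.e. the derivative of the function r ↦ K_l(r,r) at r₀ is nonzero. -/

import Mathlib

noncomputable section
open Real MeasureTheory

/-- Legendre polynomial of degree `l` (Rodrigues' formula). -/
def legP (l : ℕ) (x : ℝ) : ℝ :=
  (1 / (2 ^ l * Nat.factorial l : ℝ)) * iteratedDeriv l (fun y : ℝ => (y ^ 2 - 1) ^ l) x
def Q1 (R p r : ℝ) : ℝ := 2 * π * r ^ 2 * Real.sqrt (p ^ 2 - R ^ 2) / (R * p * Real.sqrt (p + r))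
def Q2 (p r : ℝ) : ℝ := 2 * π * r / p
def Q3 (R p r : ℝ) : ℝ := Real.sqrt (p ^ 2 - R ^ 2) * Real.sqrt (p + r) / p ^ 2
def Q4 (R p r : ℝ) : ℝ := R * r / p ^ 2

/-- The kernel `K_l` in its algebraic form. -/
def Kalg (R : ℝ) (l : ℕ) (p r : ℝ) : ℝ :=
  ∑ σ ∈ ({-1, 1} : Finset ℝ),
    σ ^ l * (Q1 R p r - σ * Q2 p r * Real.sqrt (p - r)) *
      legP l (Q3 R p r * Real.sqrt (p - r) + σ * Q4 R p r)

-- auxiliary material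
open Polynomial

namespace Aux

lemma iteratedDeriv_polyEval (p : ℝ[X]) (n : ℕ) :
    iteratedDeriv n (fun x => p.eval x) = fun x => (derivative^[n] p).eval x := by
  induction n with
  | zero => simp
  | succ n ih =>
    rw [iteratedDeriv_succ, ih, Function.iterate_succ_apply']
    funext x
    exact Polynomial.deriv (p := derivative^[n] p)

/-- The Legendre polynomial as a `Polynomial`. -/
def LP (l : ℕ) : ℝ[X] :=
  C (1 / (2 ^ l * Nat.factorial l : ℝ)) * derivative^[l] ((X ^ 2 - 1) ^ l)

lemma legP_eq (l : ℕ) (x : ℝ) : legP l x = (LP l).eval x := by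
  have h : (fun y : ℝ => (y ^ 2 - 1) ^ l) = fun y : ℝ => (((X : ℝ[X]) ^ 2 - 1) ^ l).eval y := by
    funext y; simp
  rw [legP, LP, h, iteratedDeriv_polyEval, eval_mul, eval_C]

lemma LP_ne_zero (l : ℕ) : LP l ≠ 0 := by
  have hmon : (((X : ℝ[X]) ^ 2 - 1) ^ l).Monic := by
    have := (monic_X_pow_sub_C (1 : ℝ) two_ne_zero).pow l
    simpa using this
  have hdeg : (((X : ℝ[X]) ^ 2 - 1) ^ l).natDegree = l + l := by
    have h2 : ((X : ℝ[X]) ^ 2 - 1).natDegree = 2 := by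
      have := natDegree_X_pow_sub_C (n := 2) (r := (1 : ℝ))
      simpa using this
    rw [natDegree_pow, h2]; ring
  have hco : (((X : ℝ[X]) ^ 2 - 1) ^ l).coeff (l + l) = 1 := by
    rw [← hdeg]; exact hmon.coeff_natDegree
  have hkey : (derivative^[l] (((X : ℝ[X]) ^ 2 - 1) ^ l)).coeff l
      = ((l + l).descFactorial l : ℝ) := by
    rw [coeff_iterate_derivative, hco]
    simp
  intro h
  rw [LP, mul_eq_zero] at h
  rcases h with h | h
  · rw [C_eq_zero] at h
    have h2 : (1 : ℝ) / (2 ^ l * (Nat.factorial l : ℝ)) ≠ 0 := by positivity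
    exact h2 h
  · rw [h, coeff_zero] at hkey
    have : (l + l).descFactorial l ≠ 0 := by
      rw [Ne, Nat.descFactorial_eq_zero_iff_lt]; omega
    exact_mod_cast this (by exact_mod_cast hkey.symm)

lemma iterate_derivative_comp_neg (p : ℝ[X]) (k : ℕ) :
    derivative^[k] (p.comp (-X)) = C ((-1 : ℝ) ^ k) * ((derivative^[k] p).comp (-X)) := by
  induction k with
  | zero => simp
  | succ k ih =>
    rw [Function.iterate_succ_apply', ih, derivative_C_mul, derivative_comp,
      Function.iterate_succ_apply']
    simp [pow_succ]


lemma LP_eval_neg (l : ℕ) (x : ℝ) : (LP l).eval (-x) = (-1) ^ l * (LP l).eval x := by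
  have hcomp : (((X : ℝ[X]) ^ 2 - 1) ^ l).comp (-X) = ((X : ℝ[X]) ^ 2 - 1) ^ l := by
    simp [pow_comp, sub_comp, pow_comp, X_comp, one_comp, neg_pow]
  have h := iterate_derivative_comp_neg (((X : ℝ[X]) ^ 2 - 1) ^ l) l
  rw [hcomp] at h
  -- h : D^[l] u = C((-1)^l) * (D^[l] u).comp (-X)
  have h2 : (derivative^[l] (((X : ℝ[X]) ^ 2 - 1) ^ l)).comp (-X)
      = C ((-1 : ℝ) ^ l) * derivative^[l] (((X : ℝ[X]) ^ 2 - 1) ^ l) := by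
    have := congrArg (fun q => C ((-1 : ℝ) ^ l) * q) h
    rw [this, ← mul_assoc, ← C_mul, ← mul_pow]
    norm_num
  have : (LP l).eval (-x) = ((LP l).comp (-X)).eval x := by
    rw [eval_comp]; simp
  rw [this, LP, mul_comp, C_comp, h2]
  simp [mul_comm, mul_assoc, mul_left_comm]

lemma iter_deriv_X_mul (w : ℝ[X]) (n : ℕ) :
    derivative^[n + 1] (X * w)
      = X * derivative^[n + 1] w + ((n : ℝ[X]) + 1) * derivative^[n] w := by
  induction n with
  | zero => simp [derivative_mul]; ring
  | succ n ih =>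
    have h1 : derivative^[n + 1] w = derivative (derivative^[n] w) :=
      Function.iterate_succ_apply' derivative n w
    have h2 : derivative^[n + 1 + 1] w = derivative (derivative (derivative^[n] w)) := by
      rw [Function.iterate_succ_apply' derivative (n + 1), h1]
    rw [Function.iterate_succ_apply' derivative (n + 1), ih, h1, h2]
    simp only [derivative_add, derivative_mul, derivative_X, derivative_one, derivative_natCast]
    push_cast
    ring

lemma iter_deriv_X2_mul (w : ℝ[X]) (n : ℕ) :
    derivative^[n + 2] ((X ^ 2 - 1) * w)
      = (X ^ 2 - 1) * derivative^[n + 2] w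
        + (2 * (n : ℝ[X]) + 4) * X * derivative^[n + 1] w
        + ((n : ℝ[X]) + 2) * ((n : ℝ[X]) + 1) * derivative^[n] w := by
  induction n with
  | zero =>
    show derivative (derivative ((X ^ 2 - 1) * w)) = _
    simp only [derivative_mul, derivative_sub, derivative_one, derivative_X_pow, derivative_add,
      derivative_X, derivative_C, map_ofNat, derivative_ofNat, map_zero, Nat.cast_ofNat, C_1]
    show _ = _ * derivative (derivative w) + _ * derivative w + _ * w
    push_cast
    simp only [map_one]
    ring
  | succ n ih =>
    have h1 : derivative^[n + 1] w = derivative (derivative^[n] w) :=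
      Function.iterate_succ_apply' derivative n w
    have h2 : derivative^[n + 2] w = derivative (derivative (derivative^[n] w)) := by
      rw [Function.iterate_succ_apply' derivative (n + 1), h1]
    have h3 : derivative^[n + 1 + 2] w = derivative (derivative (derivative (derivative^[n] w))) := by
      rw [Function.iterate_succ_apply' derivative (n + 2), h2]
    rw [Function.iterate_succ_apply' derivative (n + 2), ih, h1, h2, h3]
    simp only [derivative_add, derivative_mul, derivative_sub, derivative_one, derivative_X_pow,
      derivative_X, derivative_natCast, derivative_C, map_ofNat, derivative_ofNat, map_zero,
      Nat.cast_ofNat]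
    push_cast
    ring

lemma LP_ode (l : ℕ) :
    (X ^ 2 - 1) * derivative (derivative (LP l)) + 2 * X * derivative (LP l)
      = (l : ℝ[X]) * ((l : ℝ[X]) + 1) * LP l := by
  have key : ∀ v : ℝ[X], v = derivative^[l] (((X : ℝ[X]) ^ 2 - 1) ^ l) →
      (X ^ 2 - 1) * derivative (derivative v) + 2 * X * derivative v
        = (l : ℝ[X]) * ((l : ℝ[X]) + 1) * v := by
    intro v hv
    cases l with
    | zero => subst hv; simp
    | succ m =>
      set u : ℝ[X] := ((X : ℝ[X]) ^ 2 - 1) ^ (m + 1) with hu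
      have step1 : (X ^ 2 - 1) * derivative u = (2 * ((m : ℝ[X]) + 1)) * X * u := by
        have hdu : derivative u = (((m : ℝ[X]) + 1)) * (X ^ 2 - 1) ^ m * (2 * X) := by
          rw [hu, derivative_pow]
          simp only [Nat.add_sub_cancel, derivative_sub, derivative_one, derivative_X_pow,
            map_ofNat, Nat.cast_ofNat, pow_one, sub_zero]
          simp only [C_add, C_1, map_natCast]
          push_cast
          ring
        rw [hdu, hu]
        ring
      have step2 := congrArg (fun q => derivative^[m + 2] q) step1
      have hL : derivative^[m + 2] ((X ^ 2 - 1) * derivative u)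
          = (X ^ 2 - 1) * derivative^[m + 3] u
            + (2 * (m : ℝ[X]) + 4) * X * derivative^[m + 2] u
            + ((m : ℝ[X]) + 2) * ((m : ℝ[X]) + 1) * derivative^[m + 1] u := by
        rw [iter_deriv_X2_mul (derivative u) m]
        simp only [← Function.iterate_succ_apply derivative]
      have hR : derivative^[m + 2] ((2 * ((m : ℝ[X]) + 1)) * X * u)
          = (2 * ((m : ℝ[X]) + 1)) *
              (X * derivative^[m + 2] u + ((m : ℝ[X]) + 2) * derivative^[m + 1] u) := by
        have h1 : ((2 : ℝ[X]) * ((m : ℝ[X]) + 1)) * X * u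
            = C (2 * ((m : ℝ) + 1)) * (X * u) := by
          simp only [C_mul, C_add, C_1, map_ofNat, map_natCast]
          ring
        rw [h1, iterate_derivative_C_mul, iter_deriv_X_mul u (m + 1)]
        simp only [C_mul, C_add, C_1, map_ofNat, map_natCast]
        push_cast
        ring
      rw [hL, hR] at step2
      have hv1 : derivative v = derivative^[m + 2] u := by
        rw [hv, ← Function.iterate_succ_apply' derivative]
      have hv2 : derivative (derivative v) = derivative^[m + 3] u := by
        rw [hv1, ← Function.iterate_succ_apply' derivative]
      rw [hv2, hv1, hv]
      push_cast
      linear_combination step2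
  have h := key (derivative^[l] (((X : ℝ[X]) ^ 2 - 1) ^ l)) rfl
  rw [LP]
  simp only [derivative_C_mul]
  linear_combination (C (1 / (2 ^ l * (Nat.factorial l : ℝ)))) * h

lemma LP_deriv_ne_zero {l : ℕ} {x₀ : ℝ} (hx : x₀ ^ 2 ≠ 1) (h0 : (LP l).eval x₀ = 0) :
    (derivative (LP l)).eval x₀ ≠ 0 := by
  intro h1
  set P := LP l with hPdef
  have hPne : P ≠ 0 := LP_ne_zero l
  set k := rootMultiplicity x₀ P with hk
  have hroot : P.IsRoot x₀ := h0
  have hk1 : 1 ≤ k := (rootMultiplicity_pos hPne).mpr hroot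
  have hmultP' : (derivative P).rootMultiplicity x₀ = k - 1 :=
    derivative_rootMultiplicity_of_root hroot
  have hP'ne : derivative P ≠ 0 := by
    intro h
    obtain ⟨a, ha⟩ := natDegree_eq_zero.mp (natDegree_eq_zero_of_derivative_eq_zero h)
    apply hPne
    rw [← ha]
    have ha0 : a = 0 := by simpa [← ha] using h0
    simp [ha0]
  have hk2 : 2 ≤ k := by
    by_contra hlt
    have hk1' : k = 1 := by omega
    have hz : (derivative P).rootMultiplicity x₀ = 0 := by rw [hmultP', hk1']
    have hpos := (rootMultiplicity_pos hP'ne).mpr (show (derivative P).IsRoot x₀ from h1)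
    omega
  have hmultP'' : (derivative (derivative P)).rootMultiplicity x₀ = k - 2 := by
    rw [derivative_rootMultiplicity_of_root (show (derivative P).IsRoot x₀ from h1), hmultP']
    omega
  have hP''ne : derivative (derivative P) ≠ 0 := by
    intro h
    obtain ⟨a, ha⟩ := natDegree_eq_zero.mp (natDegree_eq_zero_of_derivative_eq_zero h)
    apply hP'ne
    rw [← ha]
    have ha0 : a = 0 := by simpa [← ha] using h1
    simp [ha0]
  have hode := LP_ode l
  rw [← hPdef] at hode
  have hrw : ((X : ℝ[X]) ^ 2 - 1) * derivative (derivative P)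
      = (l : ℝ[X]) * ((l : ℝ[X]) + 1) * P - 2 * X * derivative P := by
    linear_combination hode
  have hd1 : (X - C x₀) ^ (k - 1) ∣ P :=
    dvd_trans (pow_dvd_pow _ (Nat.sub_le k 1)) (pow_rootMultiplicity_dvd P x₀)
  have hd2 : (X - C x₀) ^ (k - 1) ∣ derivative P := by
    have := pow_rootMultiplicity_dvd (derivative P) x₀
    rwa [hmultP'] at this
  have hdR : (X - C x₀) ^ (k - 1)
      ∣ ((l : ℝ[X]) * ((l : ℝ[X]) + 1) * P - 2 * X * derivative P) :=
    (hd1.mul_left _).sub (hd2.mul_left _)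
  rw [← hrw] at hdR
  have hnd : ¬ (X - C x₀) ∣ ((X : ℝ[X]) ^ 2 - 1) := by
    rw [dvd_iff_isRoot]
    intro h
    apply hx
    have h2 : x₀ ^ 2 - 1 = 0 := by simpa using h
    linarith
  have hdvd'' : (X - C x₀) ^ (k - 1) ∣ derivative (derivative P) :=
    (prime_X_sub_C x₀).pow_dvd_of_dvd_mul_left _ hnd hdR
  have hle : k - 1 ≤ (derivative (derivative P)).rootMultiplicity x₀ :=
    (le_rootMultiplicity_iff hP''ne).mpr hdvd''
  omega

end Aux

open Aux Polynomial

lemma Kalg_diag (R : ℝ) (l : ℕ) (r : ℝ) :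
    Kalg R l r r = 2 * Q1 R r r * (LP l).eval (R / r) := by
  have hQ4 : Q4 R r r = R / r := by
    rcases eq_or_ne r 0 with h | h
    · simp [Q4, h]
    · rw [Q4, sq, mul_comm r r, ← div_div, mul_div_assoc, div_self h, mul_one]
  rw [Kalg, Finset.sum_pair (by norm_num : (-1 : ℝ) ≠ 1)]
  simp only [sub_self, Real.sqrt_zero, mul_zero, zero_mul, zero_add, sub_zero, legP_eq, hQ4,
    one_pow, one_mul, neg_one_mul]
  rw [LP_eval_neg]
  have hsq : ((-1 : ℝ)) ^ l * (-1) ^ l = 1 := by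
    rw [← mul_pow]; norm_num
  linear_combination (Q1 R r r * (LP l).eval (R / r)) * hsq

/-- The set of zeros of the kernel on the diagonal over `[r_m, r_M)` is finite and
each such zero is a simple zero of the diagonal map `r ↦ K_l(r, r)`. -/
theorem kernel_diagonal_zeros_finite_simple
    (R rm rM : ℝ) (hR : 0 < R) (hRm : R < rm) (hmM : rm < rM) (l : ℕ) :
    {r ∈ Set.Ico rm rM | Kalg R l r r = 0}.Finite ∧
      ∀ r₀ ∈ {r ∈ Set.Ico rm rM | Kalg R l r r = 0},
        deriv (fun r => Kalg R l r r) r₀ ≠ 0 := by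
  have hdiag : ∀ r : ℝ, Kalg R l r r = 2 * Q1 R r r * (LP l).eval (R / r) := Kalg_diag R l
  have hQ1pos : ∀ r : ℝ, rm ≤ r → 0 < Q1 R r r := by
    intro r hr
    have hRr : R < r := lt_of_lt_of_le hRm hr
    have hr0 : 0 < r := hR.trans hRr
    have hs : 0 < r ^ 2 - R ^ 2 := by nlinarith
    rw [Q1]
    apply div_pos
    · have := Real.sqrt_pos.mpr hs
      positivity
    · have : 0 < Real.sqrt (r + r) := Real.sqrt_pos.mpr (by linarith)
      positivity
  have hevalz : ∀ r : ℝ, rm ≤ r → Kalg R l r r = 0 → (LP l).eval (R / r) = 0 := by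
    intro r hr hK
    have h1 := hQ1pos r hr
    rw [hdiag] at hK
    rcases mul_eq_zero.mp hK with h | h
    · rcases mul_eq_zero.mp h with h | h
      · norm_num at h
      · exact absurd h h1.ne'
    · exact h
  constructor
  · have hfin : {x : ℝ | (LP l).IsRoot x}.Finite :=
      Polynomial.finite_setOf_isRoot (LP_ne_zero l)
    have hinj : Function.Injective (fun r : ℝ => R / r) := by
      intro a b hab
      simp only at hab
      rcases eq_or_ne a 0 with ha | ha
      · rcases eq_or_ne b 0 with hb | hb
        · rw [ha, hb]
        · rw [ha, div_zero] at hab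
          exact absurd hab.symm (div_ne_zero hR.ne' hb)
      · rcases eq_or_ne b 0 with hb | hb
        · rw [hb, div_zero] at hab
          exact absurd hab (div_ne_zero hR.ne' ha)
        · rw [div_eq_div_iff ha hb] at hab
          exact (mul_left_cancel₀ hR.ne' (by linarith)).symm
    apply Set.Finite.subset (hfin.preimage hinj.injOn)
    rintro r ⟨hrI, hrK⟩
    exact hevalz r hrI.1 hrK
  · rintro r₀ ⟨hrI, hrK⟩
    have hRr : R < r₀ := lt_of_lt_of_le hRm hrI.1
    have hr0 : 0 < r₀ := hR.trans hRr
    have h1 := hQ1pos r₀ hrI.1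
    have heval : (LP l).eval (R / r₀) = 0 := hevalz r₀ hrI.1 hrK
    have hx0 : 0 < R / r₀ := div_pos hR hr0
    have hx1 : R / r₀ < 1 := (div_lt_one hr0).mpr hRr
    have hxsq : (R / r₀) ^ 2 ≠ 1 := by nlinarith
    have hder := LP_deriv_ne_zero hxsq heval
    have hA : HasDerivAt (fun r : ℝ => (LP l).eval (R / r))
        ((derivative (LP l)).eval (R / r₀) * (R * -(r₀ ^ 2)⁻¹)) r₀ := by
      have hinv : HasDerivAt (fun r : ℝ => R / r) (R * -(r₀ ^ 2)⁻¹) r₀ := by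
        have := (hasDerivAt_inv hr0.ne').const_mul R
        simpa [div_eq_mul_inv] using this
      have := ((LP l).hasDerivAt (R / r₀)).comp r₀ hinv
      simpa [Function.comp_def] using this
    have hs1 : DifferentiableAt ℝ (fun r : ℝ => Real.sqrt (r ^ 2 - R ^ 2)) r₀ := by
      apply DifferentiableAt.sqrt (by fun_prop)
      nlinarith
    have hs2 : DifferentiableAt ℝ (fun r : ℝ => Real.sqrt (r + r)) r₀ := by
      apply DifferentiableAt.sqrt (by fun_prop)
      linarith
    have hden : R * r₀ * Real.sqrt (r₀ + r₀) ≠ 0 := by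
      have : 0 < Real.sqrt (r₀ + r₀) := Real.sqrt_pos.mpr (by linarith)
      positivity
    have hB : DifferentiableAt ℝ (fun r : ℝ => Q1 R r r) r₀ := by
      simp only [Q1]
      exact DifferentiableAt.div (DifferentiableAt.mul (by fun_prop) hs1)
        (DifferentiableAt.mul (by fun_prop) hs2) hden
    have hF : (fun r : ℝ => Kalg R l r r)
        = fun r : ℝ => (2 * Q1 R r r) * (LP l).eval (R / r) := by
      funext r; rw [hdiag r]
    rw [hF, deriv_fun_mul (hB.const_mul 2) hA.differentiableAt, hA.deriv, heval, mul_zero, zero_add]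
    exact mul_ne_zero (mul_ne_zero two_ne_zero h1.ne')
      (mul_ne_zero hder (mul_ne_zero hR.ne'
        (neg_ne_zero.mpr (inv_ne_zero (pow_ne_zero 2 hr0.ne')))))
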